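/- Assume (A1), (CFL) and p > 1. If u is a nonnegative solution of the discrete scheme that is global in time (i.e. Σ_{j=0}^∞ τ_j = +∞), then u is bounded: sup_j ‖u(·,t_j)‖_{ℓ^∞(hℤ^N)} < ∞. -/

import Mathlib

open Real Filter

/-- The discrete diffusion operator `L_h φ(x_α) = Σ_{β≠0} (φ(x_α + x_β) - φ(x_α)) ω(β)`. -/
noncomputable def discreteLh {N : ℕ} (ω : (Fin N → ℤ) → ℝ) (φ : (Fin N → ℤ) → ℝ)
    (α : Fin N → ℤ) : ℝ :=
  ∑' β : Fin N → ℤ, (φ (α + β) - φ α) * ω β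

set_option maxHeartbeats 1000000 in
/-- Under (A1) and (CFL), a nonnegative global-in-time solution of the scheme (i.e. one
with `Σⱼ τⱼ = +∞`) is bounded. -/
theorem stmt13 (N : ℕ) (p τ : ℝ) (hp : 1 < p) (hτ : 0 < τ)
    (ω : (Fin N → ℤ) → ℝ)
    (hsym : ∀ α, ω (-α) = ω α) (hnonneg : ∀ α, 0 ≤ ω α) (hω0 : ω 0 = 0)
    (hsum : Summable ω) (hpos : 0 < ∑' α, ω α)
    (hCFL : τ ≤ 1 / (4 * ∑' α, ω α))
    (u : ℕ → (Fin N → ℤ) → ℝ) (hu : ∀ j α, 0 ≤ u j α)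
    (hbdd : ∀ j, BddAbove (Set.range (u j)))
    (Un : ℕ → ℝ) (hUn : ∀ j, Un j = ⨆ α, u j α)
    (τs : ℕ → ℝ) (hτs : ∀ j, τs j = τ * min 1 (Un j ^ (1 - p)))
    (hscheme : ∀ j α, u (j + 1) α = u j α + τs j * (discreteLh ω (u j) α + u j α ^ p))
    (hglobal : ¬ Summable τs) :
    ∃ B : ℝ, ∀ j, Un j ≤ B := by
  by_contra hB
  push_neg at hB
  set S := ∑' α, ω α with hS
  have hι : Nonempty (Fin N → ℤ) := ⟨0⟩
  have hu_le_Un : ∀ j α, u j α ≤ Un j := by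
    intro j α; rw [hUn]; exact le_ciSup (hbdd j) α
  have hUn_nonneg : ∀ j, 0 ≤ Un j := fun j => (hu j 0).trans (hu_le_Un j 0)
  have hτs_nonneg : ∀ j, 0 ≤ τs j := by
    intro j; rw [hτs]
    exact mul_nonneg hτ.le (le_min zero_le_one (Real.rpow_nonneg (hUn_nonneg j) _))
  have hτs_le : ∀ j, τs j ≤ τ := by
    intro j; rw [hτs]; exact mul_le_of_le_one_right hτ.le (min_le_left _ _)
  have hτS : τ * S ≤ 1 / 4 := by
    have h4S : 0 < 4 * S := by positivity
    calc τ * S ≤ (1 / (4 * S)) * S := by nlinarith [hpos]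
      _ = 1 / 4 := by field_simp
  have hτsS : ∀ j, τs j * S ≤ 1 / 4 := by
    intro j
    have := mul_le_mul_of_nonneg_right (hτs_le j) hpos.le
    linarith
  -- summability of the summand of discreteLh
  have hLsummand : ∀ j α, Summable (fun β => (u j (α + β) - u j α) * ω β) := by
    intro j α
    apply Summable.of_norm_bounded (hsum.mul_left (Un j))
    intro β
    rw [norm_mul, Real.norm_of_nonneg (hnonneg β)]
    apply mul_le_mul_of_nonneg_right _ (hnonneg β)
    rw [Real.norm_eq_abs, abs_le]
    constructor
    · have := hu j (α + β); have := hu_le_Un j α; linarith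
    · have := hu j α; have := hu_le_Un j (α + β); linarith
  -- lower bound on the diffusion operator
  have hLh : ∀ j α, -(u j α * S) ≤ discreteLh ω (u j) α := by
    intro j α
    have h1 : -(u j α * S) = ∑' β : Fin N → ℤ, (-(u j α)) * ω β := by
      rw [tsum_mul_left]; ring
    rw [h1, discreteLh]
    apply Summable.tsum_le_tsum _ ((hsum.mul_left _)) (hLsummand j α)
    intro β
    apply mul_le_mul_of_nonneg_right _ (hnonneg β)
    have := hu j (α + β); linarith
  -- the key recurrence
  have hkey : ∀ j, Un j * (1 - τs j * S) + τs j * Un j ^ p ≤ Un (j + 1) := by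
    intro j
    set a := τs j with ha
    have ha0 : 0 ≤ a := hτs_nonneg j
    have haS : 1 - a * S ≥ 0 := by linarith [hτsS j]
    set g : ℝ → ℝ := fun x => x * (1 - a * S) + a * (max x 0) ^ p with hg
    have hg_mono : Monotone g := by
      intro x y hxy
      simp only [hg]
      have h1 : x * (1 - a * S) ≤ y * (1 - a * S) := mul_le_mul_of_nonneg_right hxy haS
      have h2 : (max x 0) ^ p ≤ (max y 0) ^ p :=
        Real.rpow_le_rpow (le_max_right x 0) (max_le_max hxy le_rfl) (by linarith)
      nlinarith
    have hg_cont : Continuous g := by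
      apply Continuous.add
      · exact continuous_id.mul continuous_const
      · exact continuous_const.mul
          ((continuous_id.max continuous_const).rpow_const (fun x => Or.inr (by linarith)))
    have h1 : ∀ α, g (u j α) ≤ u (j + 1) α := by
      intro α
      rw [hscheme j α]
      have hmax : max (u j α) 0 = u j α := max_eq_left (hu j α)
      have hL := hLh j α
      have : a * (-(u j α * S) + u j α ^ p) ≤ a * (discreteLh ω (u j) α + u j α ^ p) := by
        apply mul_le_mul_of_nonneg_left _ ha0
        linarith
      simp only [hg, hmax]
      ring_nf
      ring_nf at this
      linarith
    have h2 : g (Un j) = ⨆ α, g (u j α) := by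
      rw [hUn]
      exact hg_mono.map_ciSup_of_continuousAt (hg_cont.continuousAt) (hbdd j)
    have h3 : (⨆ α, g (u j α)) ≤ Un (j + 1) := by
      rw [hUn]
      exact ciSup_mono (hbdd (j + 1)) h1
    have h4 : g (Un j) = Un j * (1 - a * S) + a * Un j ^ p := by
      simp only [hg, max_eq_left (hUn_nonneg j)]
    linarith [h2 ▸ h3, h4.symm.le]
  -- the threshold
  set M : ℝ := max 1 ((2 * S) ^ (1 / (p - 1))) with hM
  have hM1 : 1 ≤ M := le_max_left _ _
  have hM0 : 0 < M := lt_of_lt_of_le one_pos hM1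
  have hMp : 2 * S ≤ M ^ (p - 1) := by
    have hp1 : (0:ℝ) < p - 1 := by linarith
    have h2S : (0:ℝ) ≤ 2 * S := by positivity
    have h1 : ((2 * S) ^ (1 / (p - 1))) ^ (p - 1) = 2 * S := by
      rw [← Real.rpow_mul h2S, one_div_mul_cancel (ne_of_gt hp1), Real.rpow_one]
    calc 2 * S = ((2 * S) ^ (1 / (p - 1))) ^ (p - 1) := h1.symm
      _ ≤ M ^ (p - 1) := Real.rpow_le_rpow (Real.rpow_nonneg h2S _)
          (le_max_right _ _) hp1.le
  -- growth once above the threshold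
  have hgrow : ∀ j, M ≤ Un j → Un j * (1 + τ / 2) ≤ Un (j + 1) := by
    intro j hMj
    set x := Un j with hx
    have hx1 : 1 ≤ x := hM1.trans hMj
    have hx0 : 0 < x := lt_of_lt_of_le one_pos hx1
    have hx2 : 2 * S ≤ x ^ (p - 1) := hMp.trans
      (Real.rpow_le_rpow hM0.le hMj (by linarith))
    have hτsj : τs j = τ * x ^ (1 - p) := by
      rw [hτs, min_eq_right (Real.rpow_le_one_of_one_le_of_nonpos hx1 (by linarith))]
    have hid1 : x ^ (1 - p) * x ^ p = x := by
      rw [← Real.rpow_add hx0]; norm_num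
    have hid2 : x ^ (1 - p) * x ^ (p - 1) = 1 := by
      rw [← Real.rpow_add hx0]; norm_num
    have hxp0 : 0 < x ^ (p - 1) := Real.rpow_pos_of_pos hx0 _
    have hx1p0 : 0 < x ^ (1 - p) := Real.rpow_pos_of_pos hx0 _
    have hinv : x ^ (1 - p) ≤ 1 / (2 * S) := by
      have hneg : (1 - p) = -(p - 1) := by ring
      rw [hneg, Real.rpow_neg hx0.le, ← one_div]
      exact one_div_le_one_div_of_le (by positivity) hx2
    have hkj := hkey j
    rw [hτsj, ← hx] at hkj
    -- Un (j+1) ≥ x - τ * S * x^(2-p) + τ * x, and τ * S * x^(2-p) ≤ τ x / 2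
    have hSx : τ * x ^ (1 - p) * S * x ≤ τ * x / 2 := by
      have h1 : x ^ (1 - p) * S ≤ 1 / 2 := by
        have h2 := mul_le_mul_of_nonneg_right hinv hpos.le
        have h3 : 1 / (2 * S) * S = 1 / 2 := by field_simp
        linarith [h3 ▸ h2]
      have h4 := mul_le_mul_of_nonneg_right h1 (by positivity : (0:ℝ) ≤ τ * x)
      nlinarith [h4]
    have hid1' : τ * (x ^ (1 - p) * x ^ p) = τ * x := by rw [hid1]
    nlinarith [hkj, hSx, hid1']
  -- get a point above the threshold
  obtain ⟨n, hn⟩ := hB M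
  have hind : ∀ k, M * (1 + τ / 2) ^ k ≤ Un (n + k) := by
    intro k
    induction k with
    | zero => simpa using hn.le
    | succ k ih =>
      have hpow1 : (1:ℝ) ≤ (1 + τ / 2) ^ k := one_le_pow₀ (by linarith)
      have hMk : M ≤ Un (n + k) := by nlinarith
      have := hgrow (n + k) hMk
      have h2 : M * (1 + τ / 2) ^ (k + 1) ≤ Un (n + k) * (1 + τ / 2) := by
        rw [pow_succ, ← mul_assoc]
        exact mul_le_mul_of_nonneg_right ih (by linarith)
      calc M * (1 + τ / 2) ^ (k + 1) ≤ Un (n + k) * (1 + τ / 2) := h2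
        _ ≤ Un (n + k + 1) := this
  -- summability of τs, contradiction
  apply hglobal
  rw [← summable_nat_add_iff n]
  set r : ℝ := (1 + τ / 2) ^ (1 - p) with hr
  have hr0 : 0 ≤ r := Real.rpow_nonneg (by linarith) _
  have hr1 : r < 1 := Real.rpow_lt_one_of_one_lt_of_neg (by linarith) (by linarith)
  have hbound : ∀ k : ℕ, τs (k + n) ≤ (τ * M ^ (1 - p)) * r ^ k := by
    intro k
    rw [hτs]
    have hc : (0:ℝ) < 1 + τ / 2 := by linarith
    have hck : (0:ℝ) < (1 + τ / 2) ^ k := pow_pos hc k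
    have hUnk : M * (1 + τ / 2) ^ k ≤ Un (k + n) := by
      rw [add_comm k n]; exact hind k
    have h1 : Un (k + n) ^ (1 - p) ≤ (M * (1 + τ / 2) ^ k) ^ (1 - p) :=
      Real.rpow_le_rpow_of_nonpos (by positivity) hUnk (by linarith)
    have h2 : (M * (1 + τ / 2) ^ k) ^ (1 - p) = M ^ (1 - p) * r ^ k := by
      rw [Real.mul_rpow hM0.le hck.le, hr, ← Real.rpow_natCast ((1 + τ/2) ^ (1-p)) k,
        ← Real.rpow_natCast (1 + τ/2) k, ← Real.rpow_mul hc.le, ← Real.rpow_mul hc.le]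
      ring_nf
    calc τ * min 1 (Un (k + n) ^ (1 - p)) ≤ τ * (Un (k + n) ^ (1 - p)) :=
          mul_le_mul_of_nonneg_left (min_le_right _ _) hτ.le
      _ ≤ τ * (M ^ (1 - p) * r ^ k) := by
          rw [← h2]; exact mul_le_mul_of_nonneg_left h1 hτ.le
      _ = (τ * M ^ (1 - p)) * r ^ k := by ring
  exact ((summable_geometric_of_lt_one hr0 hr1).mul_left (τ * M ^ (1 - p))).of_nonneg_of_le
    (fun k => hτs_nonneg _) hbound
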